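/- The iterated integral ∫₀¹ (∫_{1−x}^1 1/(xy) dy) dx equals π²/6. (This is the integral of the return time function over the subregions Ω_AH and Ω₂ of the Poincaré section.) -/

import Mathlib

open Real MeasureTheory intervalIntegral

noncomputable section

lemma hasSum_shift : HasSum (fun n : ℕ => 1 / ((n : ℝ) + 1) ^ 2) (Real.pi ^ 2 / 6) := by
  have h := (hasSum_nat_add_iff' (f := fun n : ℕ => (1 : ℝ) / (n : ℝ) ^ 2) 1).2 hasSum_zeta_two
  simpa using h

lemma inner_eq (x : ℝ) (hx0 : 0 < x) (hx1 : x < 1) :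
    (∫ y in (1 - x)..1, 1 / (x * y)) = ∑' n : ℕ, x ^ n / (n + 1) := by
  have hx1' : (0:ℝ) < 1 - x := by linarith
  have h0 : (0:ℝ) ∉ Set.uIcc (1 - x) 1 := by
    rw [Set.uIcc_of_le (by linarith)]
    rintro ⟨h1, h2⟩; linarith
  have habs : |x| < 1 := abs_lt.2 ⟨by linarith, hx1⟩
  have hs := (hasSum_pow_div_log_of_abs_lt_one habs).div_const x
  have hs' : HasSum (fun n : ℕ => x ^ n / (n + 1)) (-Real.log (1 - x) / x) := by
    refine hs.congr_fun fun n => ?_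
    rw [pow_succ]
    field_simp
  have : (fun y : ℝ => 1 / (x * y)) = fun y : ℝ => (1 / x) * (1 / y) := by
    funext y; rw [one_div, mul_inv, ← one_div, ← one_div]
  rw [this, intervalIntegral.integral_const_mul, integral_one_div h0,
    one_div (1 - x), Real.log_inv, hs'.tsum_eq]
  ring

lemma term_integral (n : ℕ) :
    (∫ x in Set.Ioc (0:ℝ) 1, ‖x ^ n / ((n : ℝ) + 1)‖) = 1 / ((n : ℝ) + 1) ^ 2 := by
  have h1 : (∫ x in Set.Ioc (0:ℝ) 1, ‖x ^ n / ((n : ℝ) + 1)‖)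
      = ∫ x in Set.Ioc (0:ℝ) 1, x ^ n / ((n : ℝ) + 1) := by
    refine setIntegral_congr_fun measurableSet_Ioc fun x hx => ?_
    exact Real.norm_of_nonneg (div_nonneg (pow_nonneg hx.1.le n) (by positivity))
  have hn1 : ((n : ℝ) + 1) ≠ 0 := by positivity
  rw [h1, ← intervalIntegral.integral_of_le zero_le_one]
  simp [intervalIntegral.integral_div, integral_pow]
  field_simp

theorem integral_AH :
    (∫ x in (0:ℝ)..1, ∫ y in (1 - x)..1, 1 / (x * y)) = Real.pi ^ 2 / 6 := by
  have hcong : (∫ x in (0:ℝ)..1, ∫ y in (1 - x)..1, 1 / (x * y))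
      = ∫ x in (0:ℝ)..1, ∑' n : ℕ, x ^ n / (n + 1) := by
    apply intervalIntegral.integral_congr_ae
    have hne : ∀ᵐ x : ℝ, x ≠ 1 := by
      rw [ae_iff]
      rw [show {x : ℝ | ¬ x ≠ 1} = {1} by ext x; simp]
      exact measure_singleton 1
    filter_upwards [hne] with x hx hmem
    rw [Set.uIoc_of_le zero_le_one] at hmem
    exact inner_eq x hmem.1 (lt_of_le_of_ne hmem.2 hx)
  rw [hcong, intervalIntegral.integral_of_le zero_le_one]
  have hint : ∀ n : ℕ, Integrable (fun x : ℝ => x ^ n / ((n : ℝ) + 1))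
      (volume.restrict (Set.Ioc (0:ℝ) 1)) := by
    intro n
    exact (Continuous.integrableOn_Ioc (by continuity))
  have hsum2 : Summable fun n : ℕ =>
      ∫ x in Set.Ioc (0:ℝ) 1, ‖x ^ n / ((n : ℝ) + 1)‖ := by
    simp_rw [term_integral]
    exact hasSum_shift.summable
  have := MeasureTheory.integral_tsum_of_summable_integral_norm hint hsum2
  rw [← this]
  have heq : (fun n : ℕ => ∫ x in Set.Ioc (0:ℝ) 1, x ^ n / ((n : ℝ) + 1))
      = fun n : ℕ => 1 / ((n : ℝ) + 1) ^ 2 := by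
    funext n
    rw [← term_integral n]
    refine setIntegral_congr_fun measurableSet_Ioc fun x hx => ?_
    exact (Real.norm_of_nonneg (div_nonneg (pow_nonneg hx.1.le n) (by positivity))).symm
  rw [heq]
  exact hasSum_shift.tsum_eq
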